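/- Let α ∈ (1,2), m ≥ 1, and let p₁, …, p_m and γ₁, …, γ_m be real numbers satisfying the third-order conditions: ∑_{j=1}^m γ_j = 1, ∑_{j=1}^m γ_j(p_j − α/2) = 0, and ∑_{j=1}^m γ_j(p_j²/2 − αp_j/2 + α/6 + α(α−1)/8) = 0. Define W_p : ℝ → ℝ by W_p(z) = e^{pz}((1 − e^{−z})/z)^α for z ≠ 0 and W_p(0) = 1. Then ∑_{j=1}^m γ_j W_{p_j}(z) − 1 = O(z³) as z → 0. -/

import Mathlib

open Asymptotics Filter

namespace TWSGDO3

noncomputable def v (z : ℝ) : ℝ := (1 - Real.exp (-z)) / z - 1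

notation "l" => nhdsWithin (0:ℝ) {(0:ℝ)}ᶜ

lemma hl_le : l ≤ nhds (0:ℝ) := nhdsWithin_le_nhds

lemma id_tendsto : Tendsto (fun z : ℝ => z) l (nhds 0) :=
  (continuous_id.tendsto 0).mono_left hl_le

/-- `z^(3+k) = O(z^3)` near zero. -/
lemma pow_big (k : ℕ) : (fun z : ℝ => z ^ (3 + k)) =O[l] fun z => z ^ 3 := by
  have h1 : (fun z : ℝ => z ^ k) =O[l] (fun _ => (1:ℝ)) :=
    ((continuous_pow k).tendsto 0).isBigO_one ℝ |>.mono hl_le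
  have := (isBigO_refl (fun z : ℝ => z ^ 3) l).mul h1
  simpa [pow_add, mul_comm] using this

/-- `z^3 * c(z) = O(z^3)` for continuous `c`. -/
lemma cube_mul_big (c : ℝ → ℝ) (hc : Continuous c) :
    (fun z : ℝ => z ^ 3 * c z) =O[l] fun z => z ^ 3 := by
  have h1 : c =O[l] (fun _ => (1:ℝ)) := ((hc.tendsto 0).isBigO_one ℝ).mono hl_le
  simpa using (isBigO_refl (fun z : ℝ => z ^ 3) l).mul h1

lemma exp4 : (fun z : ℝ => Real.exp (-z) - (1 - z + z^2/2 - z^3/6)) =O[nhds 0]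
    fun z => z ^ 4 := by
  rw [isBigO_iff]
  refine ⟨5/(24*4), ?_⟩
  filter_upwards [Metric.ball_mem_nhds (0:ℝ) one_pos] with z hz
  have hz1 : |(-z)| ≤ 1 := by
    rw [abs_neg]
    have := Metric.mem_ball.1 hz
    rw [Real.dist_eq, sub_zero] at this
    linarith
  have := Real.exp_bound (x := -z) hz1 (n := 4) (by norm_num)
  have hsum : ∑ m ∈ Finset.range 4, (-z) ^ m / (m.factorial : ℝ)
      = 1 - z + z^2/2 - z^3/6 := by
    simp [Finset.sum_range_succ, Nat.factorial]
    ring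
  rw [hsum] at this
  calc ‖Real.exp (-z) - (1 - z + z^2/2 - z^3/6)‖
      ≤ |(-z)| ^ 4 * ((4:ℕ).succ / ((4:ℕ).factorial * (4:ℕ))) := this
    _ = 5/(24*4) * ‖z ^ 4‖ := by
        rw [abs_neg]
        simp [Nat.factorial, abs_pow]
        ring

lemma hv3 : (fun z : ℝ => v z - (-z/2 + z^2/6)) =O[l] fun z => z ^ 3 := by
  obtain ⟨C, hC⟩ := isBigO_iff.1 exp4
  rw [isBigO_iff]
  refine ⟨C, ?_⟩
  filter_upwards [eventually_nhdsWithin_of_eventually_nhds hC,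
    self_mem_nhdsWithin] with z hz (hz0 : z ≠ 0)
  have hexp : v z - (-z/2 + z^2/6)
      = -(Real.exp (-z) - (1 - z + z^2/2 - z^3/6)) / z := by
    simp only [v]
    field_simp
    ring
  rw [hexp]
  rw [norm_div, norm_neg]
  rw [div_le_iff₀ (norm_pos_iff.2 hz0), mul_assoc]
  calc ‖Real.exp (-z) - (1 - z + z^2/2 - z^3/6)‖ ≤ C * ‖z ^ 4‖ := hz
    _ = C * (‖z ^ 3‖ * ‖z‖) := by rw [← norm_mul, ← pow_succ]

lemma hs1 : (fun z : ℝ => -z/2 + z^2/6) =O[l] fun z => z := by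
  have hc : Continuous (fun z : ℝ => -1/2 + z/6) := by continuity
  have h1 : (fun z : ℝ => -1/2 + z/6) =O[l] (fun _ => (1:ℝ)) :=
    ((hc.tendsto 0).isBigO_one ℝ).mono hl_le
  have := (isBigO_refl (fun z : ℝ => z) l).mul h1
  refine this.congr (fun z => by ring) (fun z => by ring)

lemma z3_z : (fun z : ℝ => z ^ 3) =O[l] fun z => z := by
  have h1 : (fun z : ℝ => z ^ 2) =O[l] (fun _ => (1:ℝ)) :=
    (((continuous_pow 2).tendsto 0).isBigO_one ℝ).mono hl_le
  have := (isBigO_refl (fun z : ℝ => z) l).mul h1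
  refine this.congr (fun z => by ring) (fun z => by ring)

lemma z3_z2 : (fun z : ℝ => z ^ 3) =O[l] fun z => z ^ 2 := by
  have h1 : (fun z : ℝ => z) =O[l] (fun _ => (1:ℝ)) :=
    (id_tendsto.isBigO_one ℝ)
  have := (isBigO_refl (fun z : ℝ => z ^ 2) l).mul h1
  refine this.congr (fun z => by ring) (fun z => by ring)

lemma hv1 : v =O[l] fun z => z := by
  have := (hv3.trans z3_z).add hs1
  refine this.congr_left (fun z => by ring)

lemma hv0 : Tendsto v l (nhds 0) := hv1.trans_tendsto id_tendsto

lemma hv2 : (fun z : ℝ => v z ^ 2 - z^2/4) =O[l] fun z => z ^ 3 := by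
  have hvs : (fun z : ℝ => v z ^ 2 - (-z/2 + z^2/6)^2) =O[l] fun z => z ^ 3 := by
    have hb : (fun z : ℝ => v z + (-z/2 + z^2/6)) =O[l] (fun _ => (1:ℝ)) := by
      have h2 : Tendsto (fun z : ℝ => (-z/2 + z^2/6)) l (nhds 0) :=
        hs1.trans_tendsto id_tendsto
      have := (hv0.add h2)
      simpa using this.isBigO_one ℝ
    have := hv3.mul hb
    refine this.congr (fun z => by ring) (fun z => by ring)
  have hpoly : (fun z : ℝ => (-z/2 + z^2/6)^2 - z^2/4) =O[l] fun z => z ^ 3 := by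
    have := cube_mul_big (fun z => -1/6 + z/36) (by continuity)
    refine this.congr_left (fun z => by ring)
  have := hvs.add hpoly
  refine this.congr_left (fun z => by ring)

lemma hvsmall : ∀ᶠ z in l, |v z| ≤ 1/2 := by
  have := hv0.eventually (eventually_abs_sub_lt 0 (by norm_num : (0:ℝ) < 1/2))
  filter_upwards [this] with z hz
  simpa using le_of_lt hz

lemma hlog1 : (fun z : ℝ => Real.log (1 + v z) - (v z - v z ^ 2 / 2)) =O[l]
    fun z => v z ^ 3 := by
  rw [isBigO_iff]
  refine ⟨2, ?_⟩
  filter_upwards [hvsmall] with z hz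
  have h1 : |(-v z)| < 1 := by rw [abs_neg]; linarith [abs_nonneg (v z)]
  have := Real.abs_log_sub_add_sum_range_le h1 2
  have hsum : ∑ i ∈ Finset.range 2, (-v z) ^ (i + 1) / ((i:ℝ) + 1)
      = -v z + v z ^ 2 / 2 := by
    simp [Finset.sum_range_succ]
    ring
  rw [hsum] at this
  have h2 : (1 : ℝ) - -v z = 1 + v z := by ring
  rw [h2] at this
  have h3 : |(-v z)| ^ (2+1) / (1 - |(-v z)|) ≤ 2 * |v z ^ 3| := by
    rw [abs_neg]
    have hden : (1:ℝ)/2 ≤ 1 - |v z| := by linarith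
    have hnum : |v z| ^ 3 = |v z ^ 3| := (abs_pow _ _).symm
    rw [div_le_iff₀ (by linarith [abs_nonneg (v z)] : (0:ℝ) < 1 - |v z|), ← hnum]
    have h4 : |v z| ^ 3 * |v z| ≤ |v z| ^ 3 * (1/2) :=
      mul_le_mul_of_nonneg_left hz (pow_nonneg (abs_nonneg (v z)) 3)
    have h5 : |v z| ^ (2+1) = |v z| ^ 3 := by norm_num
    rw [h5]
    nlinarith [pow_nonneg (abs_nonneg (v z)) 3]
  calc ‖Real.log (1 + v z) - (v z - v z ^ 2 / 2)‖
      = |(-v z + v z ^ 2 / 2) + Real.log (1 + v z)| := by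
        rw [Real.norm_eq_abs]; congr 1; ring
    _ ≤ |(-v z)| ^ (2+1) / (1 - |(-v z)|) := this
    _ ≤ 2 * |v z ^ 3| := h3
    _ = 2 * ‖v z ^ 3‖ := rfl

lemma hlog : (fun z : ℝ => Real.log (1 + v z) - (-z/2 + z^2/24)) =O[l]
    fun z => z ^ 3 := by
  have h1 : (fun z : ℝ => Real.log (1 + v z) - (v z - v z ^ 2 / 2)) =O[l]
      fun z => z ^ 3 := hlog1.trans (by simpa using hv1.pow 3)
  have h2 := hv2.const_mul_left (-(1:ℝ)/2)
  have := (h1.add hv3).add h2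
  refine this.congr_left (fun z => by ring)

noncomputable def u (α q z : ℝ) : ℝ := q * z + α * Real.log (1 + v z)

lemma hu3 (α q : ℝ) :
    (fun z : ℝ => u α q z - ((q - α/2) * z + (α/24) * z^2)) =O[l] fun z => z ^ 3 := by
  refine (hlog.const_mul_left α).congr_left fun z => ?_
  simp only [u]; ring

lemma hu1 (α q : ℝ) : (fun z => u α q z) =O[l] fun z => z := by
  have hAB : (fun z : ℝ => (q - α/2) * z + (α/24) * z^2) =O[l] fun z => z := by
    have hc : Continuous (fun z : ℝ => (q - α/2) + (α/24) * z) := by continuity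
    have h1 : (fun z : ℝ => (q - α/2) + (α/24) * z) =O[l] (fun _ => (1:ℝ)) :=
      ((hc.tendsto 0).isBigO_one ℝ).mono hl_le
    exact ((isBigO_refl (fun z : ℝ => z) l).mul h1).congr (fun z => by ring)
      (fun z => by ring)
  exact (((hu3 α q).trans z3_z).add hAB).congr_left fun z => by ring

lemma hu0 (α q : ℝ) : Tendsto (fun z => u α q z) l (nhds 0) :=
  (hu1 α q).trans_tendsto id_tendsto

lemma hexpu (α q : ℝ) :
    (fun z : ℝ => Real.exp (u α q z) - (1 + u α q z + u α q z ^ 2 / 2)) =O[l]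
      fun z => u α q z ^ 3 := by
  rw [isBigO_iff]
  refine ⟨(4:ℝ)/(6*3), ?_⟩
  have hev : ∀ᶠ z in l, |u α q z| ≤ 1 := by
    have := (hu0 α q).eventually (eventually_abs_sub_lt 0 one_pos)
    filter_upwards [this] with z hz
    simpa using le_of_lt hz
  filter_upwards [hev] with z hz
  have := Real.exp_bound (x := u α q z) hz (n := 3) (by norm_num)
  have hsum : ∑ m ∈ Finset.range 3, u α q z ^ m / (m.factorial : ℝ)
      = 1 + u α q z + u α q z ^ 2 / 2 := by
    simp [Finset.sum_range_succ, Nat.factorial]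
  rw [hsum] at this
  calc ‖Real.exp (u α q z) - (1 + u α q z + u α q z ^ 2 / 2)‖
      ≤ |u α q z| ^ 3 * ((3:ℕ).succ / ((3:ℕ).factorial * (3:ℕ))) := this
    _ = (4:ℝ)/(6*3) * ‖u α q z ^ 3‖ := by
        rw [Real.norm_eq_abs, abs_pow]
        simp [Nat.factorial]
        ring

lemma hu2 (α q : ℝ) :
    (fun z : ℝ => u α q z ^ 2 - (q - α/2)^2 * z^2) =O[l] fun z => z ^ 3 := by
  have hU1 : (fun z : ℝ => u α q z - (q - α/2) * z) =O[l] fun z => z ^ 2 := by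
    have hB : (fun z : ℝ => (α/24) * z^2) =O[l] fun z => z ^ 2 :=
      (isBigO_refl (fun z : ℝ => z ^ 2) l).const_mul_left _
    exact (((hu3 α q).trans z3_z2).add hB).congr_left fun z => by ring
  have hU2 : (fun z : ℝ => u α q z + (q - α/2) * z) =O[l] fun z => z :=
    (hu1 α q).add ((isBigO_refl (fun z : ℝ => z) l).const_mul_left _)
  exact ((hU1.mul hU2).congr (fun z => by ring) (fun z => by ring))

lemma key (α q : ℝ) :
    (fun z : ℝ => Real.exp (u α q z) -
      (1 + (q - α/2) * z + ((q - α/2)^2/2 + α/24) * z^2)) =O[l] fun z => z ^ 3 := by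
  have h1 : (fun z : ℝ => Real.exp (u α q z) - (1 + u α q z + u α q z ^ 2 / 2)) =O[l]
      fun z => z ^ 3 := (hexpu α q).trans (by simpa using (hu1 α q).pow 3)
  have := (h1.add (hu3 α q)).add ((hu2 α q).const_mul_left (1/2))
  exact this.congr_left fun z => by ring

end TWSGDO3

open TWSGDO3

theorem third_order_conditions_imply_O3 (α : ℝ) (hα1 : 1 < α) (hα2 : α < 2)
    (m : ℕ) (hm : 1 ≤ m) (p γ : Fin m → ℝ)
    (hc1 : ∑ j, γ j = 1)
    (hc2 : ∑ j, γ j * (p j - α / 2) = 0)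
    (hc3 : ∑ j, γ j * ((p j) ^ 2 / 2 - α * p j / 2 + α / 6 + α * (α - 1) / 8) = 0)
    (W : ℝ → ℝ → ℝ)
    (hW : ∀ (q : ℝ) (z : ℝ), z ≠ 0 →
      W q z = Real.exp (q * z) * ((1 - Real.exp (-z)) / z) ^ α)
    (hW0 : ∀ q : ℝ, W q 0 = 1) :
    (fun z : ℝ => (∑ j, γ j * W (p j) z) - 1) =O[nhds 0] (fun z : ℝ => z ^ 3) := by
  -- the polynomial part sums to 1 by the order conditions
  have hpoly : ∀ z : ℝ,
      ∑ j, γ j * (1 + (p j - α/2) * z + ((p j - α/2)^2/2 + α/24) * z^2) = 1 := by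
    intro z
    have expand : ∀ j : Fin m, γ j * (1 + (p j - α/2) * z + ((p j - α/2)^2/2 + α/24) * z^2)
        = γ j + (γ j * (p j - α/2)) * z
          + (γ j * ((p j) ^ 2 / 2 - α * p j / 2 + α / 6 + α * (α - 1) / 8)) * z^2 := by
      intro j; ring
    rw [Finset.sum_congr rfl fun j _ => expand j]
    rw [Finset.sum_add_distrib, Finset.sum_add_distrib, ← Finset.sum_mul,
      ← Finset.sum_mul, hc1, hc2, hc3]
    ring
  -- on the punctured neighborhood, W matches exp ∘ u
  have hWeq : ∀ q : ℝ, ∀ᶠ z in l, W q z = Real.exp (u α q z) := by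
    intro q
    filter_upwards [hvsmall, self_mem_nhdsWithin] with z hz (hz0 : z ≠ 0)
    have hpos : 0 < 1 + v z := by
      rcases abs_le.1 hz with ⟨h1, _⟩; linarith
    have hgv : (1 - Real.exp (-z)) / z = 1 + v z := by simp [v]
    rw [hW q z hz0, hgv, Real.rpow_def_of_pos hpos, ← Real.exp_add]
    rw [u, mul_comm α]
  have hj : ∀ j : Fin m,
      (fun z : ℝ => γ j * W (p j) z
        - γ j * (1 + (p j - α/2) * z + ((p j - α/2)^2/2 + α/24) * z^2)) =O[l]
      fun z => z ^ 3 := by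
    intro j
    have h1 := (key α (p j)).const_mul_left (γ j)
    refine h1.congr' ?_ EventuallyEq.rfl
    filter_upwards [hWeq (p j)] with z hz
    rw [hz]; ring
  have hsumO : (fun z : ℝ => (∑ j, γ j * W (p j) z) - 1) =O[l] fun z => z ^ 3 := by
    have := IsBigO.sum (s := Finset.univ) fun j _ => hj j
    refine this.congr_left fun z => ?_
    simp only [Finset.sum_apply]
    rw [Finset.sum_sub_distrib, hpoly z]
  have hpure : (fun z : ℝ => (∑ j, γ j * W (p j) z) - 1) =O[pure (0:ℝ)]
      fun z => z ^ 3 := by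
    rw [isBigO_iff]
    refine ⟨1, ?_⟩
    rw [eventually_pure]
    simp [hW0, hc1]
  rw [← nhdsNE_sup_pure (0:ℝ)]
  exact hsumO.sup hpure
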